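/- Let R be a commutative ring of characteristic 2 and let n be an odd natural number. Then the n×n matrix over R whose diagonal entries are 0 and whose off-diagonal entries are all 1 has determinant 0. -/

import Mathlib

theorem stmt5 {R : Type*} [CommRing R] [CharP R 2] (n : ℕ) (hn : Odd n) :
    (Matrix.of fun i j : Fin n => if i = j then (0 : R) else 1).det = 0 := by
  set A : Matrix (Fin n) (Fin n) R :=
    Matrix.of fun i j : Fin n => if i = j then (0 : R) else 1 with hA
  have hnpos : 0 < n := hn.pos
  have hv : A.mulVec (fun _ => (1 : R)) = 0 := by
    funext i
    simp only [Matrix.mulVec, dotProduct, hA, Matrix.of_apply, mul_one,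
      Pi.zero_apply]
    have h1 : (∑ j : Fin n, if i = j then (0:R) else 1) =
        ((Finset.univ.filter (fun j : Fin n => ¬ i = j)).card : R) := by
      rw [Finset.sum_ite, Finset.sum_const, Finset.sum_const]
      simp
    have h2 : (Finset.univ.filter (fun j : Fin n => ¬ i = j)).card = n - 1 := by
      have : (Finset.univ.filter (fun j : Fin n => ¬ i = j)) = Finset.univ \ {i} := by
        ext j
        simp [eq_comm]
      rw [this, Finset.card_sdiff_of_subset (by simp)]
      simp
    rw [h1, h2]
    have hdvd : 2 ∣ n - 1 := by
      obtain ⟨k, hk⟩ := hn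
      omega
    exact (CharP.cast_eq_zero_iff R 2 (n - 1)).mpr hdvd
  have key : A.det • (fun _ => (1 : R)) = (0 : Fin n → R) := by
    have h := congrArg (fun M : Matrix (Fin n) (Fin n) R => M.mulVec (fun _ => (1 : R)))
      (Matrix.adjugate_mul A)
    rw [← Matrix.mulVec_mulVec, hv, Matrix.mulVec_zero] at h
    rw [Matrix.smul_mulVec, Matrix.one_mulVec] at h
    exact h.symm
  have := congrFun key ⟨0, hnpos⟩
  simpa using this
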